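/- The binary tetrahedral group 2T, i.e. the subgroup of ℍˣ generated by i and c = (1+i+j+k)/2, has order 24, and equals the union of Q = {±1, ±i, ±j, ±k} with the 16 elements (ε₀·1 + ε₁·i + ε₂·j + ε₃·k)/2 for ε₀, ε₁, ε₂, ε₃ ∈ {1, -1}. -/

import Mathlib

open Quaternion Pointwise

noncomputable section

instance : CharZero ℍ[ℝ] := charZero_of_injective_algebraMap (algebraMap ℝ ℍ[ℝ]).injective

/-- The imaginary unit quaternion `i`. -/
def qi : ℍ[ℝ] := ⟨0,1,0,0⟩
/-- The imaginary unit quaternion `j`. -/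
def qj : ℍ[ℝ] := ⟨0,0,1,0⟩
/-- The imaginary unit quaternion `k`. -/
def qk : ℍ[ℝ] := ⟨0,0,0,1⟩
/-- The quaternion `c = (1 + i + j + k)/2`. -/
def qc : ℍ[ℝ] := (1 + qi + qj + qk) / 2
/-- The quaternion `(i + j)/√2`. -/
def qs : ℍ[ℝ] := (qi + qj) / ((Real.sqrt 2 : ℝ) : ℍ[ℝ])

lemma sqrt2_ne : ((Real.sqrt 2 : ℝ) : ℍ[ℝ]) ≠ 0 := by
  rw [ne_eq, ← Quaternion.coe_zero, Quaternion.coe_inj]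
  positivity

/-- `i` as a unit of the quaternions. -/
def ui : ℍ[ℝ]ˣ := Units.mk0 qi (by
    intro h; have := congrArg (fun q : ℍ[ℝ] => q.imI) h; simp [qi] at this)
/-- `j` as a unit of the quaternions. -/
def uj : ℍ[ℝ]ˣ := Units.mk0 qj (by
    intro h; have := congrArg (fun q : ℍ[ℝ] => q.imJ) h; simp [qj] at this)
/-- `k` as a unit of the quaternions. -/
def uk : ℍ[ℝ]ˣ := Units.mk0 qk (by
    intro h; have := congrArg (fun q : ℍ[ℝ] => q.imK) h; simp [qk] at this)
/-- `c = (1+i+j+k)/2` as a unit of the quaternions. -/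
def uc : ℍ[ℝ]ˣ := Units.mk0 qc
  (div_ne_zero (by
    intro h; have := congrArg (fun q : ℍ[ℝ] => q.imK) h
    change (0:ℝ) + 0 + 0 + 1 = 0 at this; norm_num at this) two_ne_zero)
/-- `(i+j)/√2` as a unit of the quaternions. -/
def us : ℍ[ℝ]ˣ := Units.mk0 qs
  (div_ne_zero (by
    intro h; have := congrArg (fun q : ℍ[ℝ] => q.imI) h
    change (1:ℝ) + 0 = 0 at this; norm_num at this) sqrt2_ne)

/-- The quaternion group `Q = ⟨i, j⟩ = {±1, ±i, ±j, ±k}`. -/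
def QQ : Subgroup ℍ[ℝ]ˣ := Subgroup.closure {ui, uj}
/-- The binary tetrahedral group `2T = ⟨i, c⟩`. -/
def TT : Subgroup ℍ[ℝ]ˣ := Subgroup.closure {ui, uc}
/-- The binary octahedral group `2O = ⟨c, (i+j)/√2⟩`. -/
def OO : Subgroup ℍ[ℝ]ˣ := Subgroup.closure {uc, us}

instance : DecidableEq (Quaternion ℤ) := fun a b =>
  decidable_of_iff _ (QuaternionAlgebra.ext_iff).symm

instance instDecQA {R : Type*} [DecidableEq R] {a b c : R} : DecidableEq ℍ[R,a,b,c] := fun x y =>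
  decidable_of_iff _ (QuaternionAlgebra.ext_iff).symm

/-- Componentwise cast of integer quaternions into real quaternions. -/
def zphi : Quaternion ℤ →+* ℍ[ℝ] where
  toFun x := ⟨(x.re : ℝ), (x.imI : ℝ), (x.imJ : ℝ), (x.imK : ℝ)⟩
  map_one' := by ext <;> simp
  map_mul' a b := by
    ext
    · refine Eq.trans ?_ (Quaternion.re_mul _ _).symm
      simp [Quaternion.re_mul]
    · refine Eq.trans ?_ (Quaternion.imI_mul _ _).symm
      simp [Quaternion.imI_mul]
    · refine Eq.trans ?_ (Quaternion.imJ_mul _ _).symm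
      simp [Quaternion.imJ_mul]
    · refine Eq.trans ?_ (Quaternion.imK_mul _ _).symm
      simp [Quaternion.imK_mul]
  map_zero' := by ext <;> simp
  map_add' a b := by ext <;> push_cast <;> simp <;> rfl

lemma zphi_mk (a b c d : ℤ) : zphi ⟨a,b,c,d⟩ = ⟨(a:ℝ),(b:ℝ),(c:ℝ),(d:ℝ)⟩ := rfl

lemma zphi_inj : Function.Injective zphi := by
  intro a b h
  rw [Quaternion.ext_iff] at h ⊢
  exact ⟨Int.cast_injective h.1, Int.cast_injective h.2.1,
    Int.cast_injective h.2.2.1, Int.cast_injective h.2.2.2⟩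

/-- Half the casted integer quaternion. -/
def psi (x : Quaternion ℤ) : ℍ[ℝ] := ((2:ℝ)⁻¹) • zphi x

lemma psi_mk (a b c d : ℤ) :
    psi ⟨a,b,c,d⟩ = ((2:ℝ)⁻¹) • (⟨(a:ℝ),(b:ℝ),(c:ℝ),(d:ℝ)⟩ : ℍ[ℝ]) := rfl

lemma psi_inj : Function.Injective psi := fun a b h =>
  zphi_inj (smul_right_injective _ (by norm_num) h)

lemma psi_step {x y c : Quaternion ℤ} (h : x * y = c + c) : psi x * psi y = psi c := by
  unfold psi
  rw [smul_mul_smul_comm, ← map_mul, h, map_add, smul_add, ← add_smul]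
  norm_num

def r4 : Quaternion ℤ := ⟨4,0,0,0⟩

lemma psi_one {x y : Quaternion ℤ} (h : x * y = r4) : psi x * psi y = 1 := by
  unfold psi
  rw [smul_mul_smul_comm, ← map_mul, h,
    show r4 = ((4:ℤ) : Quaternion ℤ) from rfl, map_intCast]
  rw [show ((4:ℤ):ℍ[ℝ]) = ((4:ℝ):ℍ[ℝ]) by norm_cast]
  rw [Quaternion.smul_coe]
  norm_num

lemma psi_two : psi ⟨2,0,0,0⟩ = 1 := by
  rw [show (⟨2,0,0,0⟩ : Quaternion ℤ) = ((2:ℤ) : Quaternion ℤ) from rfl, psi,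
    map_intCast, show ((2:ℤ):ℍ[ℝ]) = ((2:ℝ):ℍ[ℝ]) by norm_cast, Quaternion.smul_coe]
  norm_num

lemma smul_half (x : ℍ[ℝ]) : (2:ℝ)⁻¹ • x = x / 2 := by
  have h2 : (2:ℍ[ℝ]) ≠ 0 := by norm_num
  rw [eq_div_iff h2, smul_mul_assoc, mul_two, ← two_smul ℝ x, smul_smul]
  norm_num

lemma half_eq (a b c d : ℝ) :
    (((a:ℍ[ℝ]) + (b:ℍ[ℝ])*qi + (c:ℍ[ℝ])*qj + (d:ℍ[ℝ])*qk))/2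
      = (2:ℝ)⁻¹ • (⟨a,b,c,d⟩ : ℍ[ℝ]) := by
  rw [← smul_half]
  congr 1
  ext <;> simp [Quaternion.re_mul, Quaternion.imI_mul, Quaternion.imJ_mul, Quaternion.imK_mul] <;>
    simp [qi, qj, qk]

def L8 : List (Quaternion ℤ) :=
  [⟨2,0,0,0⟩, ⟨-2,0,0,0⟩, ⟨0,2,0,0⟩, ⟨0,-2,0,0⟩, ⟨0,0,2,0⟩, ⟨0,0,-2,0⟩, ⟨0,0,0,2⟩, ⟨0,0,0,-2⟩]

def L16 : List (Quaternion ℤ) :=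
  [⟨1,1,1,1⟩, ⟨1,1,1,-1⟩, ⟨1,1,-1,1⟩, ⟨1,1,-1,-1⟩, ⟨1,-1,1,1⟩, ⟨1,-1,1,-1⟩, ⟨1,-1,-1,1⟩, ⟨1,-1,-1,-1⟩, ⟨-1,1,1,1⟩, ⟨-1,1,1,-1⟩, ⟨-1,1,-1,1⟩, ⟨-1,1,-1,-1⟩, ⟨-1,-1,1,1⟩, ⟨-1,-1,1,-1⟩, ⟨-1,-1,-1,1⟩, ⟨-1,-1,-1,-1⟩]

def L24 : List (Quaternion ℤ) := L8 ++ L16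

/-- A subgroup of `ℍˣ` built from a suitable list of (doubled) integer quaternions. -/
def mkSub (L : List (Quaternion ℤ)) (h1 : (⟨2,0,0,0⟩ : Quaternion ℤ) ∈ L)
    (hmul : ∀ x ∈ L, ∀ y ∈ L, ∃ c ∈ L, x * y = c + c)
    (hstar : ∀ x ∈ L, star x ∈ L)
    (hnorm : ∀ x ∈ L, x * star x = r4 ∧ star x * x = r4) : Subgroup ℍ[ℝ]ˣ where
  carrier := {u | ∃ x ∈ L, (u : ℍ[ℝ]) = psi x}
  one_mem' := ⟨⟨2,0,0,0⟩, h1, by rw [Units.val_one, psi_two]⟩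
  mul_mem' := by
    rintro u v ⟨x,hx,hu⟩ ⟨y,hy,hv⟩
    obtain ⟨c,hc,hxy⟩ := hmul x hx y hy
    exact ⟨c, hc, by rw [Units.val_mul, hu, hv]; exact psi_step hxy⟩
  inv_mem' := by
    rintro u ⟨x,hx,hu⟩
    refine ⟨star x, hstar x hx, ?_⟩
    rw [Units.val_inv_eq_inv_val]
    refine inv_eq_of_mul_eq_one_right ?_
    rw [hu]
    exact psi_one (hnorm x hx).1

def H24 : Subgroup ℍ[ℝ]ˣ := mkSub L24 (List.mem_of_elem_eq_true (by decide)) (by decide) (by decide) (by decide)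
def H8 : Subgroup ℍ[ℝ]ˣ := mkSub L8 (List.mem_of_elem_eq_true (by decide)) (by decide) (by decide) (by decide)

lemma mem_mkSub {L h1 hmul hstar hnorm} {u : ℍ[ℝ]ˣ} :
    u ∈ mkSub L h1 hmul hstar hnorm ↔ ∃ x ∈ L, (u : ℍ[ℝ]) = psi x := Iff.rfl

lemma mem_of_val_eq {G : Subgroup ℍ[ℝ]ˣ} {u w : ℍ[ℝ]ˣ} (hw : w ∈ G)
    (h : (u:ℍ[ℝ]) = (w:ℍ[ℝ])) : u ∈ G := by
  rwa [Units.ext h]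

lemma ustep {u v : ℍ[ℝ]ˣ} {x y c : Quaternion ℤ} (hu : (u:ℍ[ℝ]) = psi x)
    (hv : (v:ℍ[ℝ]) = psi y) (h : x * y = c + c) :
    ((u * v : ℍ[ℝ]ˣ) : ℍ[ℝ]) = psi c := by
  rw [Units.val_mul, hu, hv]; exact psi_step h

lemma vi : ((ui : ℍ[ℝ]ˣ) : ℍ[ℝ]) = psi ⟨0,2,0,0⟩ := by
  rw [psi_mk]
  ext <;> simp [ui, qi] <;> norm_num <;> rfl

lemma vj : ((uj : ℍ[ℝ]ˣ) : ℍ[ℝ]) = psi ⟨0,0,2,0⟩ := by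
  rw [psi_mk]
  ext <;> simp [uj, qj] <;> norm_num <;> rfl

lemma vc : ((uc : ℍ[ℝ]ˣ) : ℍ[ℝ]) = psi ⟨1,1,1,1⟩ := by
  rw [psi_mk]
  show qc = _
  rw [qc, ← smul_half]
  congr 1
  ext <;> simp <;> simp [qi, qj, qk]

lemma TT_le_H24 : TT ≤ H24 := by
  rw [TT, Subgroup.closure_le]
  rintro x hx
  simp only [Set.mem_insert_iff, Set.mem_singleton_iff] at hx
  rcases hx with rfl | rfl
  · exact ⟨⟨0,2,0,0⟩, List.mem_of_elem_eq_true (by decide), vi⟩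
  · exact ⟨⟨1,1,1,1⟩, List.mem_of_elem_eq_true (by decide), vc⟩

lemma QQ_le_H8 : QQ ≤ H8 := by
  rw [QQ, Subgroup.closure_le]
  rintro x hx
  simp only [Set.mem_insert_iff, Set.mem_singleton_iff] at hx
  rcases hx with rfl | rfl
  · exact ⟨⟨0,2,0,0⟩, List.mem_of_elem_eq_true (by decide), vi⟩
  · exact ⟨⟨0,0,2,0⟩, List.mem_of_elem_eq_true (by decide), vj⟩

lemma H24_le_TT : H24 ≤ TT := by
  have hiT : ui ∈ TT := Subgroup.subset_closure (by simp)
  have hcT : uc ∈ TT := Subgroup.subset_closure (by simp)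
  have hv2 : (((ui * ui) : ℍ[ℝ]ˣ) : ℍ[ℝ]) = psi (⟨-2,0,0,0⟩ : Quaternion ℤ) := ustep vi vi (by decide)
  have hv3 : (((ui * uc) : ℍ[ℝ]ˣ) : ℍ[ℝ]) = psi (⟨-1,1,-1,1⟩ : Quaternion ℤ) := ustep vi vc (by decide)
  have hv4 : (((uc * ui) : ℍ[ℝ]ˣ) : ℍ[ℝ]) = psi (⟨-1,1,1,-1⟩ : Quaternion ℤ) := ustep vc vi (by decide)
  have hv5 : (((uc * uc) : ℍ[ℝ]ˣ) : ℍ[ℝ]) = psi (⟨-1,1,1,1⟩ : Quaternion ℤ) := ustep vc vc (by decide)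
  have hv6 : ((((ui * ui) * ui) : ℍ[ℝ]ˣ) : ℍ[ℝ]) = psi (⟨0,-2,0,0⟩ : Quaternion ℤ) := ustep hv2 vi (by decide)
  have hv7 : ((((ui * ui) * uc) : ℍ[ℝ]ˣ) : ℍ[ℝ]) = psi (⟨-1,-1,-1,-1⟩ : Quaternion ℤ) := ustep hv2 vc (by decide)
  have hv8 : ((((ui * uc) * ui) : ℍ[ℝ]ˣ) : ℍ[ℝ]) = psi (⟨-1,-1,1,1⟩ : Quaternion ℤ) := ustep hv3 vi (by decide)
  have hv9 : ((((ui * uc) * uc) : ℍ[ℝ]ˣ) : ℍ[ℝ]) = psi (⟨-1,-1,-1,1⟩ : Quaternion ℤ) := ustep hv3 vc (by decide)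
  have hv10 : ((((uc * ui) * uc) : ℍ[ℝ]ˣ) : ℍ[ℝ]) = psi (⟨-1,1,-1,-1⟩ : Quaternion ℤ) := ustep hv4 vc (by decide)
  have hv11 : ((((uc * uc) * ui) : ℍ[ℝ]ˣ) : ℍ[ℝ]) = psi (⟨-1,-1,1,-1⟩ : Quaternion ℤ) := ustep hv5 vi (by decide)
  have hv12 : (((((ui * ui) * ui) * ui) : ℍ[ℝ]ˣ) : ℍ[ℝ]) = psi (⟨2,0,0,0⟩ : Quaternion ℤ) := ustep hv6 vi (by decide)
  have hv13 : (((((ui * ui) * ui) * uc) : ℍ[ℝ]ˣ) : ℍ[ℝ]) = psi (⟨1,-1,1,-1⟩ : Quaternion ℤ) := ustep hv6 vc (by decide)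
  have hv14 : (((((ui * ui) * uc) * ui) : ℍ[ℝ]ˣ) : ℍ[ℝ]) = psi (⟨1,-1,-1,1⟩ : Quaternion ℤ) := ustep hv7 vi (by decide)
  have hv15 : (((((ui * ui) * uc) * uc) : ℍ[ℝ]ˣ) : ℍ[ℝ]) = psi (⟨1,-1,-1,-1⟩ : Quaternion ℤ) := ustep hv7 vc (by decide)
  have hv16 : (((((ui * uc) * uc) * ui) : ℍ[ℝ]ˣ) : ℍ[ℝ]) = psi (⟨1,-1,1,1⟩ : Quaternion ℤ) := ustep hv9 vi (by decide)
  have hv17 : (((((uc * ui) * uc) * uc) : ℍ[ℝ]ˣ) : ℍ[ℝ]) = psi (⟨0,0,-2,0⟩ : Quaternion ℤ) := ustep hv10 vc (by decide)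
  have hv18 : (((((uc * uc) * ui) * uc) : ℍ[ℝ]ˣ) : ℍ[ℝ]) = psi (⟨0,0,0,-2⟩ : Quaternion ℤ) := ustep hv11 vc (by decide)
  have hv19 : ((((((ui * ui) * ui) * uc) * ui) : ℍ[ℝ]ˣ) : ℍ[ℝ]) = psi (⟨1,1,-1,-1⟩ : Quaternion ℤ) := ustep hv13 vi (by decide)
  have hv20 : ((((((ui * ui) * ui) * uc) * uc) : ℍ[ℝ]ˣ) : ℍ[ℝ]) = psi (⟨1,1,1,-1⟩ : Quaternion ℤ) := ustep hv13 vc (by decide)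
  have hv21 : ((((((ui * ui) * uc) * uc) * ui) : ℍ[ℝ]ˣ) : ℍ[ℝ]) = psi (⟨1,1,-1,1⟩ : Quaternion ℤ) := ustep hv15 vi (by decide)
  have hv22 : ((((((ui * uc) * uc) * ui) * uc) : ℍ[ℝ]ˣ) : ℍ[ℝ]) = psi (⟨0,0,2,0⟩ : Quaternion ℤ) := ustep hv16 vc (by decide)
  have hv23 : ((((((uc * ui) * uc) * uc) * ui) : ℍ[ℝ]ˣ) : ℍ[ℝ]) = psi (⟨0,0,0,2⟩ : Quaternion ℤ) := ustep hv17 vi (by decide)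
  intro u hu
  obtain ⟨x, hx, hval⟩ := hu
  simp only [L24, List.mem_append] at hx
  unfold L8 L16 at hx
  rcases hx with (_ | ⟨_, (_ | ⟨_, (_ | ⟨_, (_ | ⟨_, (_ | ⟨_, (_ | ⟨_, (_ | ⟨_, (_ | ⟨_, ⟨⟩⟩)⟩)⟩)⟩)⟩)⟩)⟩)⟩) | (_ | ⟨_, (_ | ⟨_, (_ | ⟨_, (_ | ⟨_, (_ | ⟨_, (_ | ⟨_, (_ | ⟨_, (_ | ⟨_, (_ | ⟨_, (_ | ⟨_, (_ | ⟨_, (_ | ⟨_, (_ | ⟨_, (_ | ⟨_, (_ | ⟨_, (_ | ⟨_, ⟨⟩⟩)⟩)⟩)⟩)⟩)⟩)⟩)⟩)⟩)⟩)⟩)⟩)⟩)⟩)⟩)⟩)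
  · exact mem_of_val_eq (mul_mem (mul_mem (mul_mem hiT hiT) hiT) hiT) (hval.trans hv12.symm)
  · exact mem_of_val_eq (mul_mem hiT hiT) (hval.trans hv2.symm)
  · exact mem_of_val_eq hiT (hval.trans vi.symm)
  · exact mem_of_val_eq (mul_mem (mul_mem hiT hiT) hiT) (hval.trans hv6.symm)
  · exact mem_of_val_eq (mul_mem (mul_mem (mul_mem (mul_mem hiT hcT) hcT) hiT) hcT) (hval.trans hv22.symm)
  · exact mem_of_val_eq (mul_mem (mul_mem (mul_mem hcT hiT) hcT) hcT) (hval.trans hv17.symm)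
  · exact mem_of_val_eq (mul_mem (mul_mem (mul_mem (mul_mem hcT hiT) hcT) hcT) hiT) (hval.trans hv23.symm)
  · exact mem_of_val_eq (mul_mem (mul_mem (mul_mem hcT hcT) hiT) hcT) (hval.trans hv18.symm)
  · exact mem_of_val_eq hcT (hval.trans vc.symm)
  · exact mem_of_val_eq (mul_mem (mul_mem (mul_mem (mul_mem hiT hiT) hiT) hcT) hcT) (hval.trans hv20.symm)
  · exact mem_of_val_eq (mul_mem (mul_mem (mul_mem (mul_mem hiT hiT) hcT) hcT) hiT) (hval.trans hv21.symm)
  · exact mem_of_val_eq (mul_mem (mul_mem (mul_mem (mul_mem hiT hiT) hiT) hcT) hiT) (hval.trans hv19.symm)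
  · exact mem_of_val_eq (mul_mem (mul_mem (mul_mem hiT hcT) hcT) hiT) (hval.trans hv16.symm)
  · exact mem_of_val_eq (mul_mem (mul_mem (mul_mem hiT hiT) hiT) hcT) (hval.trans hv13.symm)
  · exact mem_of_val_eq (mul_mem (mul_mem (mul_mem hiT hiT) hcT) hiT) (hval.trans hv14.symm)
  · exact mem_of_val_eq (mul_mem (mul_mem (mul_mem hiT hiT) hcT) hcT) (hval.trans hv15.symm)
  · exact mem_of_val_eq (mul_mem hcT hcT) (hval.trans hv5.symm)
  · exact mem_of_val_eq (mul_mem hcT hiT) (hval.trans hv4.symm)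
  · exact mem_of_val_eq (mul_mem hiT hcT) (hval.trans hv3.symm)
  · exact mem_of_val_eq (mul_mem (mul_mem hcT hiT) hcT) (hval.trans hv10.symm)
  · exact mem_of_val_eq (mul_mem (mul_mem hiT hcT) hiT) (hval.trans hv8.symm)
  · exact mem_of_val_eq (mul_mem (mul_mem hcT hcT) hiT) (hval.trans hv11.symm)
  · exact mem_of_val_eq (mul_mem (mul_mem hiT hcT) hcT) (hval.trans hv9.symm)
  · exact mem_of_val_eq (mul_mem (mul_mem hiT hiT) hcT) (hval.trans hv7.symm)

lemma H8_le_QQ : H8 ≤ QQ := by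
  have hiQ : ui ∈ QQ := Subgroup.subset_closure (by simp)
  have hjQ : uj ∈ QQ := Subgroup.subset_closure (by simp)
  have hv2 : (((ui * ui) : ℍ[ℝ]ˣ) : ℍ[ℝ]) = psi (⟨-2,0,0,0⟩ : Quaternion ℤ) := ustep vi vi (by decide)
  have hv3 : (((ui * uj) : ℍ[ℝ]ˣ) : ℍ[ℝ]) = psi (⟨0,0,0,2⟩ : Quaternion ℤ) := ustep vi vj (by decide)
  have hv4 : (((uj * ui) : ℍ[ℝ]ˣ) : ℍ[ℝ]) = psi (⟨0,0,0,-2⟩ : Quaternion ℤ) := ustep vj vi (by decide)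
  have hv5 : ((((ui * ui) * ui) : ℍ[ℝ]ˣ) : ℍ[ℝ]) = psi (⟨0,-2,0,0⟩ : Quaternion ℤ) := ustep hv2 vi (by decide)
  have hv6 : ((((ui * ui) * uj) : ℍ[ℝ]ˣ) : ℍ[ℝ]) = psi (⟨0,0,-2,0⟩ : Quaternion ℤ) := ustep hv2 vj (by decide)
  have hv7 : (((((ui * ui) * ui) * ui) : ℍ[ℝ]ˣ) : ℍ[ℝ]) = psi (⟨2,0,0,0⟩ : Quaternion ℤ) := ustep hv5 vi (by decide)
  intro u hu
  obtain ⟨x, hx, hval⟩ := hu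
  unfold L8 at hx
  rcases hx with (_ | ⟨_, (_ | ⟨_, (_ | ⟨_, (_ | ⟨_, (_ | ⟨_, (_ | ⟨_, (_ | ⟨_, (_ | ⟨_, ⟨⟩⟩)⟩)⟩)⟩)⟩)⟩)⟩)⟩)
  · exact mem_of_val_eq (mul_mem (mul_mem (mul_mem hiQ hiQ) hiQ) hiQ) (hval.trans hv7.symm)
  · exact mem_of_val_eq (mul_mem hiQ hiQ) (hval.trans hv2.symm)
  · exact mem_of_val_eq hiQ (hval.trans vi.symm)
  · exact mem_of_val_eq (mul_mem (mul_mem hiQ hiQ) hiQ) (hval.trans hv5.symm)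
  · exact mem_of_val_eq hjQ (hval.trans vj.symm)
  · exact mem_of_val_eq (mul_mem (mul_mem hiQ hiQ) hjQ) (hval.trans hv6.symm)
  · exact mem_of_val_eq (mul_mem hiQ hjQ) (hval.trans hv3.symm)
  · exact mem_of_val_eq (mul_mem hjQ hiQ) (hval.trans hv4.symm)

lemma hTT24 : TT = H24 := le_antisymm TT_le_H24 H24_le_TT
lemma hQQ8 : QQ = H8 := le_antisymm QQ_le_H8 H8_le_QQ

lemma card_H24 : Nat.card H24 = 24 := by
  have hset : (H24 : Set ℍ[ℝ]ˣ) = Units.val ⁻¹' (psi '' {x | x ∈ L24}) := by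
    ext u
    simp only [SetLike.mem_coe, mem_mkSub, Set.mem_preimage, Set.mem_image, Set.mem_setOf_eq,
      H24]
    constructor
    · rintro ⟨x, hx, h⟩; exact ⟨x, hx, h.symm⟩
    · rintro ⟨x, hx, h⟩; exact ⟨x, hx, h.symm⟩
  have hrange : psi '' {x | x ∈ L24} ⊆ Set.range (Units.val : ℍ[ℝ]ˣ → ℍ[ℝ]) := by
    rintro _ ⟨x, hx, rfl⟩
    have hall : ∀ y ∈ L24, y * star y = r4 ∧ star y * y = r4 := by decide
    have hn := hall x hx
    exact ⟨Units.mk (psi x) (psi (star x)) (psi_one hn.1) (psi_one hn.2), rfl⟩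
  have h1 : Nat.card H24 = ((H24 : Set ℍ[ℝ]ˣ)).ncard := Nat.card_coe_set_eq _
  rw [h1, hset, Set.ncard_preimage_of_injective_subset_range Units.val_injective hrange,
    Set.ncard_image_of_injective _ psi_inj]
  have h2 : {x | x ∈ L24} = (L24.toFinset : Set (Quaternion ℤ)) := by
    ext x; simp
  rw [h2, Set.ncard_coe_finset]
  decide

lemma union_eq : ((H24 : Set ℍ[ℝ]ˣ)) = (H8 : Set ℍ[ℝ]ˣ) ∪
    {u : ℍ[ℝ]ˣ | ∃ e₀ ∈ ({1, -1} : Set ℝ), ∃ e₁ ∈ ({1, -1} : Set ℝ),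
      ∃ e₂ ∈ ({1, -1} : Set ℝ), ∃ e₃ ∈ ({1, -1} : Set ℝ),
      (u : ℍ[ℝ]) =
        ((e₀ : ℍ[ℝ]) + (e₁ : ℍ[ℝ]) * qi + (e₂ : ℍ[ℝ]) * qj + (e₃ : ℍ[ℝ]) * qk) / 2} := by
  ext u
  simp only [Set.mem_union, SetLike.mem_coe, mem_mkSub, H24, H8, Set.mem_setOf_eq]
  constructor
  · rintro ⟨x, hx, hval⟩
    rw [L24, List.mem_append] at hx
    rcases hx with hx | hx
    · exact Or.inl ⟨x, hx, hval⟩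
    unfold L16 at hx
    rcases hx with (_ | ⟨_, (_ | ⟨_, (_ | ⟨_, (_ | ⟨_, (_ | ⟨_, (_ | ⟨_, (_ | ⟨_, (_ | ⟨_, (_ | ⟨_, (_ | ⟨_, (_ | ⟨_, (_ | ⟨_, (_ | ⟨_, (_ | ⟨_, (_ | ⟨_, (_ | ⟨_, ⟨⟩⟩)⟩)⟩)⟩)⟩)⟩)⟩)⟩)⟩)⟩)⟩)⟩)⟩)⟩)⟩)⟩)
    · exact Or.inr ⟨(1:ℝ), (by norm_num), (1:ℝ), (by norm_num), (1:ℝ), (by norm_num), (1:ℝ), (by norm_num), by rw [hval, half_eq, psi_mk]; norm_num <;> rfl⟩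
    · exact Or.inr ⟨(1:ℝ), (by norm_num), (1:ℝ), (by norm_num), (1:ℝ), (by norm_num), (-1:ℝ), (by norm_num), by rw [hval, half_eq, psi_mk]; norm_num <;> rfl⟩
    · exact Or.inr ⟨(1:ℝ), (by norm_num), (1:ℝ), (by norm_num), (-1:ℝ), (by norm_num), (1:ℝ), (by norm_num), by rw [hval, half_eq, psi_mk]; norm_num <;> rfl⟩
    · exact Or.inr ⟨(1:ℝ), (by norm_num), (1:ℝ), (by norm_num), (-1:ℝ), (by norm_num), (-1:ℝ), (by norm_num), by rw [hval, half_eq, psi_mk]; norm_num <;> rfl⟩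
    · exact Or.inr ⟨(1:ℝ), (by norm_num), (-1:ℝ), (by norm_num), (1:ℝ), (by norm_num), (1:ℝ), (by norm_num), by rw [hval, half_eq, psi_mk]; norm_num <;> rfl⟩
    · exact Or.inr ⟨(1:ℝ), (by norm_num), (-1:ℝ), (by norm_num), (1:ℝ), (by norm_num), (-1:ℝ), (by norm_num), by rw [hval, half_eq, psi_mk]; norm_num <;> rfl⟩
    · exact Or.inr ⟨(1:ℝ), (by norm_num), (-1:ℝ), (by norm_num), (-1:ℝ), (by norm_num), (1:ℝ), (by norm_num), by rw [hval, half_eq, psi_mk]; norm_num <;> rfl⟩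
    · exact Or.inr ⟨(1:ℝ), (by norm_num), (-1:ℝ), (by norm_num), (-1:ℝ), (by norm_num), (-1:ℝ), (by norm_num), by rw [hval, half_eq, psi_mk]; norm_num <;> rfl⟩
    · exact Or.inr ⟨(-1:ℝ), (by norm_num), (1:ℝ), (by norm_num), (1:ℝ), (by norm_num), (1:ℝ), (by norm_num), by rw [hval, half_eq, psi_mk]; norm_num <;> rfl⟩
    · exact Or.inr ⟨(-1:ℝ), (by norm_num), (1:ℝ), (by norm_num), (1:ℝ), (by norm_num), (-1:ℝ), (by norm_num), by rw [hval, half_eq, psi_mk]; norm_num <;> rfl⟩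
    · exact Or.inr ⟨(-1:ℝ), (by norm_num), (1:ℝ), (by norm_num), (-1:ℝ), (by norm_num), (1:ℝ), (by norm_num), by rw [hval, half_eq, psi_mk]; norm_num <;> rfl⟩
    · exact Or.inr ⟨(-1:ℝ), (by norm_num), (1:ℝ), (by norm_num), (-1:ℝ), (by norm_num), (-1:ℝ), (by norm_num), by rw [hval, half_eq, psi_mk]; norm_num <;> rfl⟩
    · exact Or.inr ⟨(-1:ℝ), (by norm_num), (-1:ℝ), (by norm_num), (1:ℝ), (by norm_num), (1:ℝ), (by norm_num), by rw [hval, half_eq, psi_mk]; norm_num <;> rfl⟩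
    · exact Or.inr ⟨(-1:ℝ), (by norm_num), (-1:ℝ), (by norm_num), (1:ℝ), (by norm_num), (-1:ℝ), (by norm_num), by rw [hval, half_eq, psi_mk]; norm_num <;> rfl⟩
    · exact Or.inr ⟨(-1:ℝ), (by norm_num), (-1:ℝ), (by norm_num), (-1:ℝ), (by norm_num), (1:ℝ), (by norm_num), by rw [hval, half_eq, psi_mk]; norm_num <;> rfl⟩
    · exact Or.inr ⟨(-1:ℝ), (by norm_num), (-1:ℝ), (by norm_num), (-1:ℝ), (by norm_num), (-1:ℝ), (by norm_num), by rw [hval, half_eq, psi_mk]; norm_num <;> rfl⟩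
  · rintro (⟨x, hx, hval⟩ | ⟨e₀, he₀, e₁, he₁, e₂, he₂, e₃, he₃, hval⟩)
    · exact ⟨x, List.mem_append_left _ hx, hval⟩
    simp only [Set.mem_insert_iff, Set.mem_singleton_iff] at he₀ he₁ he₂ he₃
    rcases he₀ with rfl | rfl <;> rcases he₁ with rfl | rfl <;> rcases he₂ with rfl | rfl <;> rcases he₃ with rfl | rfl
    · exact ⟨⟨1,1,1,1⟩, List.mem_of_elem_eq_true (by decide), by rw [hval, half_eq, psi_mk]; norm_num <;> rfl⟩
    · exact ⟨⟨1,1,1,-1⟩, List.mem_of_elem_eq_true (by decide), by rw [hval, half_eq, psi_mk]; norm_num <;> rfl⟩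
    · exact ⟨⟨1,1,-1,1⟩, List.mem_of_elem_eq_true (by decide), by rw [hval, half_eq, psi_mk]; norm_num <;> rfl⟩
    · exact ⟨⟨1,1,-1,-1⟩, List.mem_of_elem_eq_true (by decide), by rw [hval, half_eq, psi_mk]; norm_num <;> rfl⟩
    · exact ⟨⟨1,-1,1,1⟩, List.mem_of_elem_eq_true (by decide), by rw [hval, half_eq, psi_mk]; norm_num <;> rfl⟩
    · exact ⟨⟨1,-1,1,-1⟩, List.mem_of_elem_eq_true (by decide), by rw [hval, half_eq, psi_mk]; norm_num <;> rfl⟩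
    · exact ⟨⟨1,-1,-1,1⟩, List.mem_of_elem_eq_true (by decide), by rw [hval, half_eq, psi_mk]; norm_num <;> rfl⟩
    · exact ⟨⟨1,-1,-1,-1⟩, List.mem_of_elem_eq_true (by decide), by rw [hval, half_eq, psi_mk]; norm_num <;> rfl⟩
    · exact ⟨⟨-1,1,1,1⟩, List.mem_of_elem_eq_true (by decide), by rw [hval, half_eq, psi_mk]; norm_num <;> rfl⟩
    · exact ⟨⟨-1,1,1,-1⟩, List.mem_of_elem_eq_true (by decide), by rw [hval, half_eq, psi_mk]; norm_num <;> rfl⟩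
    · exact ⟨⟨-1,1,-1,1⟩, List.mem_of_elem_eq_true (by decide), by rw [hval, half_eq, psi_mk]; norm_num <;> rfl⟩
    · exact ⟨⟨-1,1,-1,-1⟩, List.mem_of_elem_eq_true (by decide), by rw [hval, half_eq, psi_mk]; norm_num <;> rfl⟩
    · exact ⟨⟨-1,-1,1,1⟩, List.mem_of_elem_eq_true (by decide), by rw [hval, half_eq, psi_mk]; norm_num <;> rfl⟩
    · exact ⟨⟨-1,-1,1,-1⟩, List.mem_of_elem_eq_true (by decide), by rw [hval, half_eq, psi_mk]; norm_num <;> rfl⟩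
    · exact ⟨⟨-1,-1,-1,1⟩, List.mem_of_elem_eq_true (by decide), by rw [hval, half_eq, psi_mk]; norm_num <;> rfl⟩
    · exact ⟨⟨-1,-1,-1,-1⟩, List.mem_of_elem_eq_true (by decide), by rw [hval, half_eq, psi_mk]; norm_num <;> rfl⟩


/-- The binary tetrahedral group `2T = ⟨i, c⟩` has order 24 and equals the union of
`Q = {±1, ±i, ±j, ±k}` with the 16 elements `(ε₀·1 + ε₁·i + ε₂·j + ε₃·k)/2`,
`ε₀, ε₁, ε₂, ε₃ ∈ {1, -1}`. -/
theorem statement1 :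
    Nat.card TT = 24 ∧
    (TT : Set ℍ[ℝ]ˣ) = (QQ : Set ℍ[ℝ]ˣ) ∪
      {u : ℍ[ℝ]ˣ | ∃ e₀ ∈ ({1, -1} : Set ℝ), ∃ e₁ ∈ ({1, -1} : Set ℝ),
        ∃ e₂ ∈ ({1, -1} : Set ℝ), ∃ e₃ ∈ ({1, -1} : Set ℝ),
        (u : ℍ[ℝ]) =
          ((e₀ : ℍ[ℝ]) + (e₁ : ℍ[ℝ]) * qi + (e₂ : ℍ[ℝ]) * qj + (e₃ : ℍ[ℝ]) * qk) / 2} := by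
  constructor
  · rw [hTT24]; exact card_H24
  · rw [hTT24, hQQ8, union_eq]
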